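/- Let X and Z be non-empty finite sets, let P_X be a strictly positive pmf on X, let P_Z be a strictly positive pmf on Z, and let {ψ_x ∈ ℝ^{|Z|} : x ∈ X} satisfy ψ_xᵀ√P_Z = 0 for every x. For ε ∈ ℝ define the conditional pmfs P^ε_{Z|X=x} = P_Z + ε√P_Z ψ_x (entry-wise product), the joint pmf P^ε_{Z,X}(z,x) = P^ε_{Z|X=x}(z) P_X(x), the mutual information I_ε(X;Z) = Σ_{x,z} P^ε_{Z,X}(z,x) log( P^ε_{Z,X}(z,x) / (P_Z(z) P_X(x)) ), and the DTM B_ε = [P_Z]^{-1/2} P^ε_{Z,X} [P_X]^{-1/2}. Then, as ε → 0, I_ε(X;Z) − (1/2)(‖B_ε‖_F² − 1) = o(ε²). (Note that P^ε_{Z|X=x} are valid strictly positive pmfs for all sufficiently small ε, and the Z-marginal of P^ε_{Z,X} is P_Z.) -/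

import Mathlib

open Filter Asymptotics

lemma log_taylor2 : (fun u : ℝ => Real.log (1+u) - u + u^2/2) =o[nhds (0:ℝ)] fun u => u^2 := by
  have h1 : (fun u : ℝ => Real.log (1+u) - u + u^2/2) =O[nhds (0:ℝ)] fun u => u^3 := by
    rw [Asymptotics.isBigO_iff]
    refine ⟨2, ?_⟩
    have hev : ∀ᶠ u : ℝ in nhds 0, |u| < 1/2 := by
      have := eventually_abs_sub_lt (0:ℝ) (by norm_num : (0:ℝ) < 1/2)
      simpa using this
    filter_upwards [hev] with u hu
    have h' := Real.abs_log_sub_add_sum_range_le (x := -u) (by rw [abs_neg]; linarith) 2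
    simp only [Finset.sum_range_succ, Finset.sum_range_zero, abs_neg] at h'
    have heq : 1 - -u = 1 + u := by ring
    rw [heq] at h'
    have h'' : |Real.log (1+u) - u + u^2/2| ≤ |u|^3 / (1 - |u|) := by
      push_cast at h'
      rw [show (0:ℝ) + (-u)^(0+1)/(0+1) + (-u)^(1+1)/(1+1) + Real.log (1+u)
          = Real.log (1+u) - u + u^2/2 from by ring] at h'
      convert h' using 2
    have hle : |u|^3 / (1 - |u|) ≤ 2 * |u|^3 := by
      rw [div_le_iff₀ (by linarith)]
      nlinarith [abs_nonneg u, pow_nonneg (abs_nonneg u) 3]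
    calc ‖Real.log (1+u) - u + u^2/2‖ = |Real.log (1+u) - u + u^2/2| := rfl
      _ ≤ 2 * |u|^3 := h''.trans hle
      _ = 2 * ‖u^3‖ := by rw [Real.norm_eq_abs, abs_pow]
  exact h1.trans_isLittleO (Asymptotics.isLittleO_pow_pow (by norm_num : 2 < 3))

lemma G_taylor : (fun u : ℝ => (1+u) * Real.log (1+u) - u - u^2/2) =o[nhds (0:ℝ)] fun u => u^2 := by
  have hbig : (fun u : ℝ => 1+u) =O[nhds (0:ℝ)] fun _ => (1:ℝ) := by
    rw [Asymptotics.isBigO_iff]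
    refine ⟨2, ?_⟩
    filter_upwards [eventually_abs_sub_lt (0:ℝ) one_pos] with u hu
    simp only [sub_zero] at hu
    rw [Real.norm_eq_abs, norm_one, mul_one]
    calc |1+u| ≤ |(1:ℝ)| + |u| := abs_add_le _ _
      _ ≤ 2 := by rw [abs_one]; linarith
  have hmul : (fun u : ℝ => (1+u) * (Real.log (1+u) - u + u^2/2)) =o[nhds (0:ℝ)] fun u => u^2 := by
    have := hbig.mul_isLittleO log_taylor2
    simpa using this
  have hcube : (fun u : ℝ => u^3/2) =o[nhds (0:ℝ)] fun u => u^2 := by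
    have := (Asymptotics.isLittleO_pow_pow (𝕜 := ℝ) (by norm_num : 2 < 3)).const_mul_left (1/2)
    simpa [div_eq_mul_inv, mul_comm] using this
  have := hmul.sub hcube
  refine this.congr' ?_ EventuallyEq.rfl
  filter_upwards with u
  ring


lemma key_term (p a : ℝ) (hp : 0 < p) :
    (fun ε : ℝ => (p + ε*a) * Real.log ((p + ε*a)/p) - ε*a - ε^2*a^2/(2*p))
      =o[nhds (0:ℝ)] fun ε => ε^2 := by
  set c : ℝ := a/p with hc
  have htend : Tendsto (fun ε : ℝ => ε * c) (nhds 0) (nhds 0) := by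
    have : Tendsto (fun ε : ℝ => ε * c) (nhds 0) (nhds (0 * c)) :=
      Filter.tendsto_id.mul_const c
    simpa using this
  have hcomp : (fun ε : ℝ => (1 + ε*c) * Real.log (1 + ε*c) - ε*c - (ε*c)^2/2)
      =o[nhds (0:ℝ)] fun ε => (ε*c)^2 := G_taylor.comp_tendsto htend
  have hbig : (fun ε : ℝ => (ε*c)^2) =O[nhds (0:ℝ)] fun ε => ε^2 := by
    have : (fun ε : ℝ => (ε*c)^2) = fun ε => c^2 * ε^2 := by funext ε; ring
    rw [this]; exact Asymptotics.isBigO_const_mul_self _ _ _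
  have h := (hcomp.trans_isBigO hbig).const_mul_left p
  refine h.congr' ?_ EventuallyEq.rfl
  filter_upwards with ε
  have h1 : (p + ε*a)/p = 1 + ε*c := by rw [hc]; field_simp
  rw [h1, hc]
  generalize Real.log (1 + ε*(a/p)) = L
  field_simp

/-- **Local approximation of mutual information.** Under the local perturbation
`P^ε_{Z|X=x} = P_Z + ε √P_Z ψ_x` with `ψ_xᵀ √P_Z = 0` for every `x`, the mutual
information `I_ε(X;Z)` of the joint pmf `P^ε_{Z,X}(z,x) = P^ε_{Z|X=x}(z) P_X(x)`
satisfies `I_ε(X;Z) = (1/2)(‖B_ε‖_F² − 1) + o(ε²)` as `ε → 0`, where `B_ε` is the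
DTM of `P^ε_{Z,X}`. -/
theorem mutual_information_local_approximation {X Z : Type*} [Fintype X] [Fintype Z]
    [Nonempty X] [Nonempty Z]
    (PX : X → ℝ) (hPX_pos : ∀ x, 0 < PX x) (hPX_sum : ∑ x, PX x = 1)
    (PZ : Z → ℝ) (hPZ_pos : ∀ z, 0 < PZ z) (hPZ_sum : ∑ z, PZ z = 1)
    (ψ : X → Z → ℝ) (hψ : ∀ x, ∑ z, ψ x z * Real.sqrt (PZ z) = 0) :
    (fun ε : ℝ =>
        (∑ x, ∑ z, ((PZ z + ε * Real.sqrt (PZ z) * ψ x z) * PX x) *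
            Real.log (((PZ z + ε * Real.sqrt (PZ z) * ψ x z) * PX x) /
              (PZ z * PX x))) -
          (1 / 2) *
            ((∑ z, ∑ x, (((PZ z + ε * Real.sqrt (PZ z) * ψ x z) * PX x) /
                (Real.sqrt (PZ z) * Real.sqrt (PX x))) ^ 2) - 1))
      =o[nhds (0 : ℝ)] fun ε => ε ^ 2 := by
  set f : X → Z → ℝ → ℝ := fun x z ε =>
    PX x * ((PZ z + ε * (Real.sqrt (PZ z) * ψ x z)) *
        Real.log ((PZ z + ε * (Real.sqrt (PZ z) * ψ x z)) / PZ z)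
      - ε * (Real.sqrt (PZ z) * ψ x z)
      - ε^2 * (Real.sqrt (PZ z) * ψ x z)^2 / (2 * PZ z)) with hf
  have hzero : ∀ x, ∑ z, Real.sqrt (PZ z) * ψ x z = 0 := by
    intro x
    rw [← hψ x]
    exact Finset.sum_congr rfl fun z _ => mul_comm _ _
  have hfun : ∀ ε : ℝ,
      ((∑ x, ∑ z, ((PZ z + ε * Real.sqrt (PZ z) * ψ x z) * PX x) *
            Real.log (((PZ z + ε * Real.sqrt (PZ z) * ψ x z) * PX x) /
              (PZ z * PX x))) -
          (1 / 2) *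
            ((∑ z, ∑ x, (((PZ z + ε * Real.sqrt (PZ z) * ψ x z) * PX x) /
                (Real.sqrt (PZ z) * Real.sqrt (PX x))) ^ 2) - 1))
        = ∑ x, ∑ z, f x z ε := by
    intro ε
    have hlog : ∀ x z, ((PZ z + ε * Real.sqrt (PZ z) * ψ x z) * PX x) *
        Real.log (((PZ z + ε * Real.sqrt (PZ z) * ψ x z) * PX x) / (PZ z * PX x))
        = PX x * ((PZ z + ε * (Real.sqrt (PZ z) * ψ x z)) *
            Real.log ((PZ z + ε * (Real.sqrt (PZ z) * ψ x z)) / PZ z)) := by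
      intro x z
      rw [mul_div_mul_right _ _ (hPX_pos x).ne', mul_assoc]
      ring
    have hsq : ∀ x z, (((PZ z + ε * Real.sqrt (PZ z) * ψ x z) * PX x) /
        (Real.sqrt (PZ z) * Real.sqrt (PX x))) ^ 2
        = PX x * (PZ z + 2 * (ε * (Real.sqrt (PZ z) * ψ x z)) + ε^2 * ψ x z^2) := by
      intro x z
      rw [div_pow, mul_pow, mul_pow (Real.sqrt (PZ z)),
        Real.sq_sqrt (hPZ_pos z).le, Real.sq_sqrt (hPX_pos x).le,
        div_eq_iff (mul_pos (hPZ_pos z) (hPX_pos x)).ne']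
      linear_combination (ε^2 * ψ x z^2 * PX x^2) * Real.sq_sqrt (hPZ_pos z).le
    simp only [hlog, hsq]
    have hswap : (∑ z : Z, ∑ x : X,
          PX x * (PZ z + 2 * (ε * (Real.sqrt (PZ z) * ψ x z)) + ε^2 * ψ x z^2))
        = ∑ x : X, ∑ z : Z,
          PX x * (PZ z + 2 * (ε * (Real.sqrt (PZ z) * ψ x z)) + ε^2 * ψ x z^2) :=
      Finset.sum_comm
    rw [hswap]
    have hB : ∀ x ∈ Finset.univ (α := X),
        (∑ z : Z, PX x * (PZ z + 2 * (ε * (Real.sqrt (PZ z) * ψ x z)) + ε^2 * ψ x z^2))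
        = PX x * (1 + ε^2 * ∑ z, ψ x z^2) := by
      intro x _
      rw [← Finset.mul_sum]
      congr 1
      rw [Finset.sum_add_distrib, Finset.sum_add_distrib, hPZ_sum]
      have h2 : ∑ z, 2 * (ε * (Real.sqrt (PZ z) * ψ x z))
          = 2 * ε * ∑ z, Real.sqrt (PZ z) * ψ x z := by
        rw [Finset.mul_sum]
        exact Finset.sum_congr rfl fun z _ => by ring
      rw [h2, hzero x, ← Finset.mul_sum]
      ring
    rw [Finset.sum_congr rfl hB]
    have hBsum : ∑ x, PX x * (1 + ε^2 * ∑ z, ψ x z^2)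
        = 1 + ε^2 * ∑ x, PX x * ∑ z, ψ x z^2 := by
      simp only [mul_add, mul_one]
      rw [Finset.sum_add_distrib, hPX_sum, Finset.mul_sum]
      congr 1
      exact Finset.sum_congr rfl fun x _ => by ring
    rw [hBsum]
    have hR : ∀ x ∈ Finset.univ (α := X), (∑ z, f x z ε)
        = (∑ z, PX x * ((PZ z + ε * (Real.sqrt (PZ z) * ψ x z)) *
            Real.log ((PZ z + ε * (Real.sqrt (PZ z) * ψ x z)) / PZ z)))
          - ε^2/2 * (PX x * ∑ z, ψ x z^2) := by
      intro x _
      have hterm : ∀ z, f x z ε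
          = PX x * ((PZ z + ε * (Real.sqrt (PZ z) * ψ x z)) *
              Real.log ((PZ z + ε * (Real.sqrt (PZ z) * ψ x z)) / PZ z))
            - PX x * (ε * (Real.sqrt (PZ z) * ψ x z))
            - (PX x * ε^2 / 2) * ψ x z^2 := by
        intro z
        have hd : ε^2 * (Real.sqrt (PZ z) * ψ x z)^2 / (2 * PZ z)
            = ε^2 * ψ x z^2 / 2 := by
          rw [mul_pow, Real.sq_sqrt (hPZ_pos z).le]
          field_simp [(hPZ_pos z).ne']
        simp only [hf]
        rw [hd]
        ring
      rw [Finset.sum_congr rfl fun z _ => hterm z,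
        Finset.sum_sub_distrib, Finset.sum_sub_distrib]
      have e2 : ∑ z, PX x * (ε * (Real.sqrt (PZ z) * ψ x z)) = 0 := by
        rw [← Finset.mul_sum, ← Finset.mul_sum, hzero x, mul_zero, mul_zero]
      have e3 : ∑ z, (PX x * ε^2 / 2) * ψ x z^2
          = ε^2/2 * (PX x * ∑ z, ψ x z^2) := by
        rw [← Finset.mul_sum]
        ring
      rw [e2, e3, sub_zero]
    rw [Finset.sum_congr rfl hR, Finset.sum_sub_distrib]
    have hlast : ∑ x, ε^2/2 * (PX x * ∑ z, ψ x z^2)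
        = ε^2/2 * ∑ x, PX x * ∑ z, ψ x z^2 := by
      rw [Finset.mul_sum]
    rw [hlast]
    ring
  have heq : (fun ε : ℝ =>
        (∑ x, ∑ z, ((PZ z + ε * Real.sqrt (PZ z) * ψ x z) * PX x) *
            Real.log (((PZ z + ε * Real.sqrt (PZ z) * ψ x z) * PX x) /
              (PZ z * PX x))) -
          (1 / 2) *
            ((∑ z, ∑ x, (((PZ z + ε * Real.sqrt (PZ z) * ψ x z) * PX x) /
                (Real.sqrt (PZ z) * Real.sqrt (PX x))) ^ 2) - 1))
      = fun ε => ∑ x, ∑ z, f x z ε := funext hfun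
  rw [heq]
  refine Asymptotics.IsLittleO.fun_sum fun x _ => Asymptotics.IsLittleO.fun_sum fun z _ => ?_
  simp only [hf]
  exact (key_term (PZ z) (Real.sqrt (PZ z) * ψ x z) (hPZ_pos z)).const_mul_left (PX x)
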